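/- Let n ≥ 6 be an integer with n ≡ 2 (mod 4) and let ζ be a complex n-th root of unity. Then ζ is a root of the polynomial 3x^{6 + n/2} + 3x^{2 + n/2} + 2x^8 + 2x^4 + 2 if and only if ζ = -1. -/
import Mathlib

lemma half_not_integral : ¬ IsIntegral ℤ ((2:ℂ)⁻¹) := by
  intro h
  have h2 : IsIntegral ℤ ((2:ℚ)⁻¹) := by
    rw [← isIntegral_algebraMap_iff (algebraMap ℚ ℂ).injective]
    simpa using h
  obtain ⟨x, hx⟩ := IsIntegrallyClosed.isIntegral_iff.mp h2
  have : (x : ℚ) = 2⁻¹ := by exact_mod_cast hx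
  have h1 : (2 * x : ℚ) = 1 := by rw [this]; norm_num
  have : (2 * x : ℤ) = 1 := by exact_mod_cast h1
  omega

lemma sum_inv_integral (z : ℂ) (N : ℕ) (hN : N ≠ 0) (h : z ^ N = 1) :
    IsIntegral ℤ (z + z⁻¹) := by
  have hzint : IsIntegral ℤ z :=
    IsIntegral.of_pow (Nat.pos_of_ne_zero hN) (h ▸ isIntegral_one)
  have hmul : z * z ^ (N - 1) = 1 := by
    rw [← pow_succ']
    have : N - 1 + 1 = N := Nat.succ_pred_eq_of_pos (Nat.pos_of_ne_zero hN)
    rw [this, h]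
  have hinv : z⁻¹ = z ^ (N - 1) := inv_eq_of_mul_eq_one_right hmul
  have : IsIntegral ℤ (z⁻¹) := hinv ▸ hzint.pow _
  exact hzint.add this

theorem stmt_13 (n : ℕ) (hn : 6 ≤ n) (hmod : n % 4 = 2) (ζ : ℂ) (hζ : ζ ^ n = 1) :
    3 * ζ ^ (6 + n / 2) + 3 * ζ ^ (2 + n / 2) + 2 * ζ ^ 8 + 2 * ζ ^ 4 + 2 = 0 ↔ ζ = -1 := by
  set m := n / 2 with hm
  have hmodd : m % 2 = 1 := by omega
  have hnm : n = 2 * m := by omega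
  have hζ0 : ζ ≠ 0 := by
    intro h0; rw [h0, zero_pow (by omega : n ≠ 0)] at hζ; norm_num at hζ
  have hodd : Odd m := Nat.odd_iff.mpr hmodd
  constructor
  · intro h
    have hw2 : (ζ ^ m) * (ζ ^ m) = 1 := by
      rw [← pow_add]; rw [hnm] at hζ; rw [← hζ]; ring_nf
    have hzn : (ζ ^ 2) ^ n = 1 := by rw [← pow_mul, mul_comm, pow_mul, hζ, one_pow]
    have hζ2 : ζ ^ 2 ≠ 0 := pow_ne_zero _ hζ0
    rcases mul_self_eq_one_iff.mp hw2 with hw | hw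
    · -- case ζ^m = 1
      exfalso
      have h1 : 2 * ζ ^ 8 + 3 * ζ ^ 6 + 2 * ζ ^ 4 + 3 * ζ ^ 2 + 2 = 0 := by
        have e1 : ζ ^ (6 + m) = ζ ^ 6 := by rw [pow_add, hw, mul_one]
        have e2 : ζ ^ (2 + m) = ζ ^ 2 := by rw [pow_add, hw, mul_one]
        rw [e1, e2] at h; linear_combination h
      have hfac : (2 * (ζ^2)^2 - ζ^2 + 2) * (ζ^2 + 1)^2 = 0 := by linear_combination h1
      rcases mul_eq_zero.mp hfac with hq | hs
      · have hhalf : ζ ^ 2 + (ζ ^ 2)⁻¹ = 2⁻¹ := by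
          have h2 : (ζ ^ 2) * (ζ ^ 2 + (ζ ^ 2)⁻¹ - 2⁻¹) = 0 := by
            rw [mul_sub, mul_add, mul_inv_cancel₀ hζ2]
            linear_combination hq / 2
          exact sub_eq_zero.mp ((mul_eq_zero.mp h2).resolve_left hζ2)
        have := sum_inv_integral (ζ ^ 2) n (by omega) hzn
        rw [hhalf] at this
        exact half_not_integral this
      · have hz1 : ζ ^ 2 = -1 := by
          have h0 := pow_eq_zero_iff (n := 2) (by omega) |>.mp hs
          linear_combination h0
        have : (1 : ℂ) = -1 := by
          calc (1:ℂ) = ζ ^ n := hζ.symm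
            _ = (ζ ^ 2) ^ m := by rw [← pow_mul, hnm, mul_comm]
            _ = (-1) ^ m := by rw [hz1]
            _ = -1 := hodd.neg_one_pow
        norm_num at this
    · -- case ζ^m = -1
      have h1 : 2 * ζ ^ 8 - 3 * ζ ^ 6 + 2 * ζ ^ 4 - 3 * ζ ^ 2 + 2 = 0 := by
        have e1 : ζ ^ (6 + m) = -ζ ^ 6 := by rw [pow_add, hw]; ring
        have e2 : ζ ^ (2 + m) = -ζ ^ 2 := by rw [pow_add, hw]; ring
        rw [e1, e2] at h; linear_combination h
      have hfac : (2 * (ζ^2)^2 + ζ^2 + 2) * (ζ^2 - 1)^2 = 0 := by linear_combination h1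
      rcases mul_eq_zero.mp hfac with hq | hs
      · exfalso
        have hu : -(ζ ^ 2) ≠ 0 := neg_ne_zero.mpr hζ2
        have hhalf : (-(ζ ^ 2)) + (-(ζ ^ 2))⁻¹ = 2⁻¹ := by
          have h2 : (-(ζ ^ 2)) * ((-(ζ ^ 2)) + (-(ζ ^ 2))⁻¹ - 2⁻¹) = 0 := by
            rw [mul_sub, mul_add, mul_inv_cancel₀ hu]
            linear_combination hq / 2
          exact sub_eq_zero.mp ((mul_eq_zero.mp h2).resolve_left hu)
        have hneg : (-(ζ ^ 2)) ^ (2 * n) = 1 := by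
          rw [Even.neg_pow ⟨n, by ring⟩, ← pow_mul,
            show 2 * (2 * n) = n * 4 by ring, pow_mul, hζ, one_pow]
        have := sum_inv_integral (-(ζ ^ 2)) (2 * n) (by omega) hneg
        rw [hhalf] at this
        exact half_not_integral this
      · have hz1 : ζ ^ 2 = 1 := by
          have h0 := pow_eq_zero_iff (n := 2) (by omega) |>.mp hs
          linear_combination h0
        have hζζ : ζ * ζ = 1 := by rw [← pow_two]; exact hz1
        rcases mul_self_eq_one_iff.mp hζζ with h1 | h1
        · exfalso; rw [h1, one_pow] at hw; norm_num at hw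
        · exact h1
  · intro h
    subst h
    have e1 : (-1 : ℂ) ^ (6 + m) = -1 := (Nat.odd_iff.mpr (by omega)).neg_one_pow
    have e2 : (-1 : ℂ) ^ (2 + m) = -1 := (Nat.odd_iff.mpr (by omega)).neg_one_pow
    rw [e1, e2]
    norm_num
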